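/- Let H be a complex Hilbert space, and let P, Q, R be orthogonal projections on H with Q - P and R - Q compact. Then R - P is compact, and ind(RP : im P → im R) = ind(RQ : im Q → im R) + ind(QP : im P → im Q). -/

import Mathlib

open ContinuousLinearMap

/-- The Fredholm index of a bounded operator: `dim ker - dim coker`. -/
noncomputable def fredholmIndex {E F : Type*} [NormedAddCommGroup E] [NormedSpace ℂ E]
    [NormedAddCommGroup F] [NormedSpace ℂ F] (T : E →L[ℂ] F) : ℤ :=
  (Module.finrank ℂ (LinearMap.ker (T : E →ₗ[ℂ] F)) : ℤ) - Module.finrank ℂ (F ⧸ LinearMap.range (T : E →ₗ[ℂ] F))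

/-- The operator `Q P` viewed as a map from `im P` to `im Q`. -/
noncomputable def relOp {H : Type*} [NormedAddCommGroup H] [InnerProductSpace ℂ H]
    [CompleteSpace H] (P Q : H →L[ℂ] H) :
    ↥(LinearMap.range (P : H →ₗ[ℂ] H)) →L[ℂ] ↥(LinearMap.range (Q : H →ₗ[ℂ] H)) :=
  (Q.comp (LinearMap.range (P : H →ₗ[ℂ] H)).subtypeL).codRestrict (LinearMap.range (Q : H →ₗ[ℂ] H))
    (fun x => LinearMap.mem_range_self (Q : H →ₗ[ℂ] H) _)

/-! ### Part A: purely algebraic index additivity for compositions -/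

section Algebra

open Submodule Module

variable {E F G : Type*} [NormedAddCommGroup E] [NormedSpace ℂ E]
  [NormedAddCommGroup F] [NormedSpace ℂ F] [NormedAddCommGroup G] [NormedSpace ℂ G]

lemma fd_of_sub_quot {V : Type*} [AddCommGroup V] [Module ℂ V] (p : Submodule ℂ V)
    (h1 : FiniteDimensional ℂ p) (h2 : FiniteDimensional ℂ (V ⧸ p)) : FiniteDimensional ℂ V := by
  obtain ⟨q, hq⟩ := Submodule.exists_isCompl p
  haveI : FiniteDimensional ℂ q := (Submodule.quotientEquivOfIsCompl p q hq).finiteDimensional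
  exact (Submodule.prodEquivOfIsCompl p q hq).finiteDimensional

section comp
variable (f : E →L[ℂ] F) (g : F →L[ℂ] G)

private lemma ker_le_ker_comp : LinearMap.ker (f).toLinearMap ≤ LinearMap.ker (g.comp f).toLinearMap := by
  intro x hx
  simp only [LinearMap.mem_ker, coe_coe] at *
  simp [hx]

private noncomputable def kphi : ↥(LinearMap.ker (g.comp f).toLinearMap) →ₗ[ℂ] F :=
  (f : E →ₗ[ℂ] F) ∘ₗ (LinearMap.ker (g.comp f).toLinearMap).subtype

private lemma kphi_ker : LinearMap.ker (kphi f g) =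
    comap (LinearMap.ker (g.comp f).toLinearMap).subtype (LinearMap.ker (f).toLinearMap) := by
  ext x; exact Iff.rfl

private lemma kphi_range : LinearMap.range (kphi f g) =
    LinearMap.ker (g).toLinearMap ⊓ LinearMap.range (f).toLinearMap := by
  ext y
  simp only [kphi, LinearMap.mem_range, LinearMap.coe_comp, Function.comp_apply,
    Submodule.coe_subtype, Submodule.mem_inf, LinearMap.mem_ker, coe_coe]
  constructor
  · rintro ⟨⟨x, hx⟩, rfl⟩
    simp only [LinearMap.mem_ker, ContinuousLinearMap.comp_apply] at hx
    exact ⟨hx, ⟨x, rfl⟩⟩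
  · rintro ⟨hy, x, rfl⟩
    exact ⟨⟨x, by simp [LinearMap.mem_ker, hy]⟩, rfl⟩

lemma fd_ker_comp (h1 : FiniteDimensional ℂ (LinearMap.ker (f).toLinearMap))
    (h3 : FiniteDimensional ℂ (LinearMap.ker (g).toLinearMap)) :
    FiniteDimensional ℂ (LinearMap.ker (g.comp f).toLinearMap) := by
  haveI hkf : FiniteDimensional ℂ (LinearMap.ker (kphi f g)) := by
    rw [kphi_ker]
    exact (Submodule.comapSubtypeEquivOfLe (ker_le_ker_comp f g)).symm.finiteDimensional
  haveI hrf : FiniteDimensional ℂ (LinearMap.range (kphi f g)) := by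
    rw [kphi_range]
    exact Submodule.finiteDimensional_of_le inf_le_left
  exact fd_of_sub_quot (LinearMap.ker (kphi f g)) hkf
    ((LinearMap.quotKerEquivRange (kphi f g)).symm.finiteDimensional)

lemma finrank_ker_comp (h1 : FiniteDimensional ℂ (LinearMap.ker (f).toLinearMap))
    (h3 : FiniteDimensional ℂ (LinearMap.ker (g).toLinearMap)) :
    finrank ℂ (LinearMap.ker (g.comp f).toLinearMap) =
      finrank ℂ (LinearMap.ker (f).toLinearMap) + finrank ℂ ↥(LinearMap.ker (g).toLinearMap ⊓ LinearMap.range (f).toLinearMap) := by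
  haveI := fd_ker_comp f g h1 h3
  have h := LinearMap.finrank_range_add_finrank_ker (kphi f g)
  rw [kphi_range, kphi_ker,
    (Submodule.comapSubtypeEquivOfLe (ker_le_ker_comp f g)).finrank_eq] at h
  omega

lemma finrank_ker_decomp (h3 : FiniteDimensional ℂ (LinearMap.ker (g).toLinearMap)) :
    finrank ℂ (LinearMap.ker (g).toLinearMap) = finrank ℂ ↥(LinearMap.ker (g).toLinearMap ⊓ LinearMap.range (f).toLinearMap)
      + finrank ℂ (↥(LinearMap.ker (g).toLinearMap ⊔ LinearMap.range (f).toLinearMap) ⧸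
          comap (LinearMap.ker (g).toLinearMap ⊔ LinearMap.range (f).toLinearMap).subtype (LinearMap.range (f).toLinearMap)) := by
  haveI := h3
  have e2 := (LinearMap.quotientInfEquivSupQuotient (LinearMap.ker (g).toLinearMap) (LinearMap.range (f).toLinearMap)).finrank_eq
  rw [← Submodule.comap_inf] at e2
  have e1 := Submodule.finrank_quotient_add_finrank
    (comap (LinearMap.ker (g).toLinearMap).subtype (LinearMap.ker (g).toLinearMap ⊓ LinearMap.range (f).toLinearMap))
  rw [(Submodule.comapSubtypeEquivOfLe (inf_le_left :
    LinearMap.ker (g).toLinearMap ⊓ LinearMap.range (f).toLinearMap ≤ LinearMap.ker (g).toLinearMap)).finrank_eq] at e1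
  omega

lemma finrank_coker_decomp (h2 : FiniteDimensional ℂ (F ⧸ LinearMap.range (f).toLinearMap)) :
    finrank ℂ (F ⧸ LinearMap.range (f).toLinearMap) =
      finrank ℂ (F ⧸ (LinearMap.ker (g).toLinearMap ⊔ LinearMap.range (f).toLinearMap))
      + finrank ℂ (↥(LinearMap.ker (g).toLinearMap ⊔ LinearMap.range (f).toLinearMap) ⧸
          comap (LinearMap.ker (g).toLinearMap ⊔ LinearMap.range (f).toLinearMap).subtype (LinearMap.range (f).toLinearMap)) := by
  haveI := h2
  set s : Submodule ℂ F := LinearMap.ker (g).toLinearMap ⊔ LinearMap.range (f).toLinearMap with hs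
  have hle : LinearMap.range (f).toLinearMap ≤ s := le_sup_right
  have e1 := Submodule.finrank_quotient_add_finrank (map (LinearMap.range (f).toLinearMap).mkQ s)
  have e3 := (Submodule.quotientQuotientEquivQuotient (LinearMap.range (f).toLinearMap) s hle).finrank_eq
  have e4 : finrank ℂ (↥s ⧸ comap s.subtype (LinearMap.range (f).toLinearMap))
      = finrank ℂ (map (LinearMap.range (f).toLinearMap).mkQ s) := by
    have hψ : LinearMap.range ((LinearMap.range (f).toLinearMap).mkQ ∘ₗ s.subtype)
        = map (LinearMap.range (f).toLinearMap).mkQ s := by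
      rw [LinearMap.range_comp, Submodule.range_subtype]
    have hkψ : LinearMap.ker ((LinearMap.range (f).toLinearMap).mkQ ∘ₗ s.subtype)
        = comap s.subtype (LinearMap.range (f).toLinearMap) := by
      rw [LinearMap.ker_comp, Submodule.ker_mkQ]
    have := (LinearMap.quotKerEquivRange ((LinearMap.range (f).toLinearMap).mkQ ∘ₗ s.subtype)).finrank_eq
    rw [hψ, hkψ] at this
    exact this
  omega

lemma finrank_coker_comp (h2 : FiniteDimensional ℂ (F ⧸ LinearMap.range (f).toLinearMap))
    (h4 : FiniteDimensional ℂ (G ⧸ LinearMap.range (g).toLinearMap)) :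
    FiniteDimensional ℂ (G ⧸ LinearMap.range (g.comp f).toLinearMap) ∧
    finrank ℂ (G ⧸ LinearMap.range (g.comp f).toLinearMap) =
      finrank ℂ (G ⧸ LinearMap.range (g).toLinearMap)
      + finrank ℂ (F ⧸ (LinearMap.ker (g).toLinearMap ⊔ LinearMap.range (f).toLinearMap)) := by
  haveI := h2; haveI := h4
  set s : Submodule ℂ F := LinearMap.ker (g).toLinearMap ⊔ LinearMap.range (f).toLinearMap with hs
  set rgf : Submodule ℂ G := LinearMap.range (g.comp f).toLinearMap with hrgf
  set ψ : F →ₗ[ℂ] (G ⧸ rgf) := rgf.mkQ ∘ₗ (g : F →ₗ[ℂ] G) with hψdef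
  have hkψ : LinearMap.ker ψ = s := by
    ext x
    simp only [hψdef, LinearMap.mem_ker, LinearMap.comp_apply, coe_coe]
    rw [← LinearMap.mem_ker, Submodule.ker_mkQ]
    constructor
    · rintro ⟨y, hy⟩
      simp only [ContinuousLinearMap.coe_coe, ContinuousLinearMap.comp_apply] at hy
      have hx : x = (x - f y) + f y := by abel
      rw [hx]
      exact Submodule.add_mem_sup (by simp [LinearMap.mem_ker, map_sub, hy]) ⟨y, rfl⟩
    · intro hx
      obtain ⟨a, ha, b, hb, rfl⟩ := Submodule.mem_sup.1 hx
      obtain ⟨y, rfl⟩ := hb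
      refine ⟨y, ?_⟩
      simp only [ContinuousLinearMap.coe_coe, ContinuousLinearMap.comp_apply, map_add]
      rw [show g a = 0 from LinearMap.mem_ker.1 ha]
      simp
  have hrψ : LinearMap.range ψ = map rgf.mkQ (LinearMap.range (g).toLinearMap) := by
    rw [hψdef, LinearMap.range_comp]
  have hle2 : rgf ≤ LinearMap.range (g).toLinearMap := by
    rintro x ⟨y, rfl⟩
    exact ⟨f y, rfl⟩
  have efs : finrank ℂ (F ⧸ s) = finrank ℂ (map rgf.mkQ (LinearMap.range (g).toLinearMap)) := by
    have := (LinearMap.quotKerEquivRange ψ).finrank_eq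
    rw [hkψ, hrψ] at this
    exact this
  haveI hfds : FiniteDimensional ℂ (F ⧸ s) :=
    (Submodule.quotientQuotientEquivQuotient (LinearMap.range (f).toLinearMap) s le_sup_right).finiteDimensional
  haveI hfd1 : FiniteDimensional ℂ (map rgf.mkQ (LinearMap.range (g).toLinearMap)) := by
    have e := LinearMap.quotKerEquivRange ψ
    rw [hkψ, hrψ] at e
    exact e.finiteDimensional
  haveI hfd2 : FiniteDimensional ℂ ((G ⧸ rgf) ⧸ map rgf.mkQ (LinearMap.range (g).toLinearMap)) :=
    (Submodule.quotientQuotientEquivQuotient rgf (LinearMap.range (g).toLinearMap) hle2).symm.finiteDimensional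
  haveI hfdN : FiniteDimensional ℂ (G ⧸ rgf) :=
    fd_of_sub_quot _ hfd1 hfd2
  refine ⟨hfdN, ?_⟩
  have e1 := Submodule.finrank_quotient_add_finrank (map rgf.mkQ (LinearMap.range (g).toLinearMap))
  have e3 := (Submodule.quotientQuotientEquivQuotient rgf (LinearMap.range (g).toLinearMap) hle2).finrank_eq
  omega

lemma index_comp (h1 : FiniteDimensional ℂ (LinearMap.ker (f).toLinearMap))
    (h2 : FiniteDimensional ℂ (F ⧸ LinearMap.range (f).toLinearMap))
    (h3 : FiniteDimensional ℂ (LinearMap.ker (g).toLinearMap))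
    (h4 : FiniteDimensional ℂ (G ⧸ LinearMap.range (g).toLinearMap)) :
    fredholmIndex (g.comp f) = fredholmIndex g + fredholmIndex f := by
  have k1 := finrank_ker_comp f g h1 h3
  have k2 := finrank_ker_decomp f g h3
  have k3 := finrank_coker_decomp f g h2
  have k4 := (finrank_coker_comp f g h2 h4).2
  unfold fredholmIndex
  omega

end comp

end Algebra

/-! ### Part B: Riesz–Fredholm theory for `1 + compact` on Hilbert space -/

section Analysis

open Submodule Module Metric Filter Topology

variable {E : Type*} [NormedAddCommGroup E] [InnerProductSpace ℂ E]

/-- A closed subspace on which a compact operator restricts to the identity is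
finite-dimensional. -/
lemma fd_of_fixedpoints {K : E →L[ℂ] E} (hK : IsCompactOperator ⇑K)
    (S : Submodule ℂ E) (hS : IsClosed (S : Set E)) (hfix : ∀ x ∈ S, K x = x) :
    FiniteDimensional ℂ ↥S := by
  obtain ⟨C, hC, him⟩ := hK.image_closedBall_subset_compact 1
  have himg : ((↑) '' (closedBall (0 : ↥S) 1) : Set E) = (S : Set E) ∩ closedBall 0 1 := by
    ext x
    constructor
    · rintro ⟨y, hy, rfl⟩
      refine ⟨y.2, ?_⟩
      simpa [mem_closedBall, dist_eq_norm] using (by simpa [mem_closedBall, dist_eq_norm] using hy :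
        ‖(y : E)‖ ≤ 1)
    · rintro ⟨hxS, hx⟩
      exact ⟨⟨x, hxS⟩, by simpa [mem_closedBall, dist_eq_norm] using
        (by simpa [mem_closedBall, dist_eq_norm] using hx : ‖x‖ ≤ 1), rfl⟩
  have hsub : ((↑) '' (closedBall (0 : ↥S) 1) : Set E) ⊆ C := by
    rw [himg]
    rintro x ⟨hxS, hx⟩
    rw [← hfix x hxS]
    exact him ⟨x, hx, rfl⟩
  have hclosed : IsClosed ((↑) '' (closedBall (0 : ↥S) 1) : Set E) := by
    rw [himg]; exact hS.inter Metric.isClosed_closedBall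
  have hcpt : IsCompact (closedBall (0 : ↥S) 1) := by
    rw [Topology.IsEmbedding.subtypeVal.isCompact_iff]
    exact IsCompact.of_isClosed_subset hC hclosed hsub
  exact FiniteDimensional.of_isCompact_closedBall₀ ℂ zero_lt_one hcpt

lemma ker_fd_of_cpt (T : E →L[ℂ] E) (hK : IsCompactOperator ⇑(T - 1)) :
    FiniteDimensional ℂ (LinearMap.ker (T).toLinearMap) := by
  have h1 : IsCompactOperator ⇑(1 - T : E →L[ℂ] E) := by
    have := hK.neg
    have he : ⇑(1 - T : E →L[ℂ] E) = -⇑(T - 1) := by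
      funext x; simp
    rwa [he]
  refine fd_of_fixedpoints h1 (LinearMap.ker (T).toLinearMap) ?_ ?_
  · exact ContinuousLinearMap.isClosed_ker T
  · intro x hx
    have : T x = 0 := hx
    simp [this]

/-- Any continuous linear map into a finite-dimensional space is compact. -/
lemma cpt_of_fd_codomain {V W : Type*} [NormedAddCommGroup V] [NormedSpace ℂ V]
    [NormedAddCommGroup W] [NormedSpace ℂ W] [FiniteDimensional ℂ W] (u : V →L[ℂ] W) :
    IsCompactOperator ⇑u := by
  refine ⟨closedBall 0 ‖u‖, isCompact_closedBall _ _, ?_⟩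
  refine Filter.mem_of_superset (Metric.closedBall_mem_nhds 0 zero_lt_one) ?_
  intro x hx
  simp only [Set.mem_preimage, mem_closedBall, dist_eq_norm, sub_zero] at *
  calc ‖u x‖ ≤ ‖u‖ * ‖x‖ := u.le_opNorm x
    _ ≤ ‖u‖ * 1 := mul_le_mul_of_nonneg_left hx (norm_nonneg u)
    _ = ‖u‖ := mul_one _

/-- A map into a closed submodule is compact if its composition with the inclusion is. -/
lemma cpt_into_submodule {V : Type*} [NormedAddCommGroup V] [NormedSpace ℂ V]
    (S : Submodule ℂ E) (hS : IsClosed (S : Set E)) (f : V → ↥S)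
    (hf : IsCompactOperator ((↑) ∘ f : V → E)) : IsCompactOperator f := by
  obtain ⟨C, hC, hmem⟩ := hf
  refine ⟨(↑) ⁻¹' C, ?_, by rw [← Set.preimage_comp]; exact hmem⟩
  rw [Topology.IsEmbedding.subtypeVal.isCompact_iff,
    Set.image_preimage_eq_inter_range, Subtype.range_coe]
  exact (hC.inter_right hS)

/-- `ker T† = (range T)ᗮ`. -/
lemma ker_adjoint_eq_orthogonal_range [CompleteSpace E] (T : E →L[ℂ] E) :
    LinearMap.ker (ContinuousLinearMap.adjoint T).toLinearMap = (LinearMap.range (T).toLinearMap)ᗮ := by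
  ext x
  simp only [LinearMap.mem_ker, Submodule.mem_orthogonal, ContinuousLinearMap.coe_coe]
  constructor
  · rintro hx u ⟨y, rfl⟩
    have h := (ContinuousLinearMap.adjoint_inner_right T y x).symm
    rw [hx] at h
    simpa using h
  · intro h
    rw [← inner_self_eq_zero (𝕜 := ℂ) (x := ContinuousLinearMap.adjoint T x)]
    rw [ContinuousLinearMap.adjoint_inner_left T (ContinuousLinearMap.adjoint T x) x]
    have := h (T (ContinuousLinearMap.adjoint T x)) ⟨_, rfl⟩
    rw [← inner_conj_symm, this, map_zero]

variable [CompleteSpace E]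

lemma range_closed_of_cpt (T : E →L[ℂ] E) (hK : IsCompactOperator ⇑(T - 1)) :
    IsClosed ((LinearMap.range (T).toLinearMap : Submodule ℂ E) : Set E) := by
  haveI hfd : FiniteDimensional ℂ (LinearMap.ker (T).toLinearMap) := ker_fd_of_cpt T hK
  set N := LinearMap.ker (T).toLinearMap with hN
  obtain ⟨C, hC, him⟩ := hK.image_closedBall_subset_compact 1
  have hbdd : ∃ c : ℝ, 0 < c ∧ ∀ x ∈ Nᗮ, ‖x‖ ≤ c * ‖T x‖ := by
    by_contra hc
    push_neg at hc
    have hseq : ∀ n : ℕ, ∃ x : E, x ∈ Nᗮ ∧ ‖x‖ = 1 ∧ ‖T x‖ < 1 / (n + 1) := by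
      intro n
      obtain ⟨x, hxW, hx⟩ := hc ((n : ℝ) + 1) (by positivity)
      have hxn : 0 < ‖x‖ :=
        lt_of_le_of_lt (mul_nonneg (by positivity) (norm_nonneg _)) hx
      refine ⟨‖x‖⁻¹ • x, Submodule.smul_mem _ _ hxW, ?_, ?_⟩
      · rw [norm_smul, norm_inv, norm_norm, inv_mul_cancel₀ hxn.ne']
      · have hsm : T (‖x‖⁻¹ • x) = ‖x‖⁻¹ • T x := T.map_smul_of_tower _ _
        rw [hsm, norm_smul, norm_inv, norm_norm, div_eq_mul_inv, one_mul]
        have h2 : ‖T x‖ < ‖x‖ / ((n : ℝ) + 1) :=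
          (lt_div_iff₀ (by positivity)).2 (by nlinarith [hx])
        calc ‖x‖⁻¹ * ‖T x‖ < ‖x‖⁻¹ * (‖x‖ / ((n : ℝ) + 1)) :=
              mul_lt_mul_of_pos_left h2 (by positivity)
          _ = ((n : ℝ) + 1)⁻¹ := by field_simp
    choose u hu1 hu2 hu3 using hseq
    have humem : ∀ n, (T - 1) (u n) ∈ C := fun n =>
      him ⟨u n, by simp [mem_closedBall, dist_eq_norm, hu2 n], rfl⟩
    obtain ⟨y, hyC, φ, hφ, hconv⟩ := hC.tendsto_subseq humem
    have hTu : Tendsto (fun n => T (u (φ n))) atTop (𝓝 0) := by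
      refine squeeze_zero_norm (f := fun n => T (u (φ n)))
        (a := fun n => 1 / ((n : ℝ) + 1)) ?_ ?_
      · intro n
        refine le_of_lt (lt_of_lt_of_le (hu3 (φ n)) ?_)
        apply one_div_le_one_div_of_le (by positivity)
        have h' : (n : ℝ) ≤ (φ n : ℝ) := by exact_mod_cast hφ.le_apply
        linarith
      · exact tendsto_one_div_add_atTop_nhds_zero_nat
    have hulim : Tendsto (fun n => u (φ n)) atTop (𝓝 (0 - y)) := by
      have heq : (fun n => u (φ n)) = fun n => T (u (φ n)) - (T - 1) (u (φ n)) := by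
        funext n; simp
      rw [heq]
      exact hTu.sub hconv
    have hnorm : ‖(0 : E) - y‖ = 1 := by
      have h1 : Tendsto (fun n => ‖u (φ n)‖) atTop (𝓝 ‖(0 : E) - y‖) := hulim.norm
      have h2 : Tendsto (fun n => ‖u (φ n)‖) atTop (𝓝 1) := by
        simp [hu2]
      exact tendsto_nhds_unique h1 h2
    have hmemW : (0 : E) - y ∈ Nᗮ :=
      (Submodule.isClosed_orthogonal N).mem_of_tendsto hulim
        (Filter.Eventually.of_forall fun n => hu1 (φ n))
    have hmemN : (0 : E) - y ∈ N := by
      have h1 : Tendsto (fun n => T (u (φ n))) atTop (𝓝 (T (0 - y))) :=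
        (T.continuous.tendsto _).comp hulim
      have : T (0 - y) = 0 := tendsto_nhds_unique h1 hTu
      exact LinearMap.mem_ker.2 this
    have : (0 : E) - y = 0 := by
      have := (Submodule.mem_orthogonal _ _).1 hmemW _ hmemN
      exact inner_self_eq_zero.1 this
    rw [this] at hnorm
    simp at hnorm
  obtain ⟨c, hc0, hc⟩ := hbdd
  haveI : CompleteSpace ↥Nᗮ := (Submodule.isClosed_orthogonal N).completeSpace_coe
  set f : ↥Nᗮ →L[ℂ] E := T.comp Nᗮ.subtypeL with hf
  have hanti : AntilipschitzWith c.toNNReal ⇑f := by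
    apply ContinuousLinearMap.antilipschitz_of_bound
    intro z
    rw [Real.coe_toNNReal c hc0.le]
    simpa [hf] using hc (z : E) z.2
  have hclr : IsClosed (Set.range ⇑f) := hanti.isClosed_range f.uniformContinuous
  have hrange : ((LinearMap.range (T).toLinearMap : Submodule ℂ E) : Set E) = Set.range ⇑f := by
    ext v
    constructor
    · rintro ⟨x, rfl⟩
      refine ⟨⟨x - ↑(orthogonalProjection N x), Submodule.sub_starProjection_mem_orthogonal x⟩, ?_⟩
      have hker : T ↑(orthogonalProjection N x) = 0 :=
        LinearMap.mem_ker.1 (orthogonalProjection N x).2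
      simp only [Submodule.coe_orthogonalProjectionOnto_apply] at hker
      simp [hf, map_sub, hker]
    · rintro ⟨z, rfl⟩
      exact ⟨↑z, rfl⟩
  rw [hrange]
  exact hclr

lemma surj_of_inj_of_cpt (T : E →L[ℂ] E) (hK : IsCompactOperator ⇑(T - 1))
    (hinj : Function.Injective ⇑T) : Function.Surjective ⇑T := by
  by_contra hns
  have hpow : ∀ n : ℕ, IsCompactOperator ⇑(T ^ n - 1) := by
    intro n
    induction n with
    | zero => simpa using isCompactOperator_zero
    | succ n ih =>
      have heq : T ^ (n + 1) - 1 = (T ^ n) * (T - 1) + (T ^ n - 1) := by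
        rw [pow_succ]; noncomm_ring
      have hco : ⇑((T ^ n) * (T - 1) + (T ^ n - 1)) = (⇑(T ^ n) ∘ ⇑(T - 1)) + ⇑(T ^ n - 1) :=
        rfl
      rw [heq, hco]
      exact (hK.continuous_comp (T ^ n).continuous).add ih
  have hinjn : ∀ n : ℕ, Function.Injective ⇑(T ^ n) := by
    intro n
    induction n with
    | zero => simp [Function.Injective]
    | succ n ih =>
      rw [pow_succ]
      intro a b hab
      exact hinj (ih hab)
  have hRcl : ∀ n : ℕ, IsClosed ((LinearMap.range (T ^ n).toLinearMap : Submodule ℂ E) : Set E) :=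
    fun n => range_closed_of_cpt _ (hpow n)
  have hle : ∀ n : ℕ, LinearMap.range (T ^ (n + 1)).toLinearMap ≤ LinearMap.range (T ^ n).toLinearMap := by
    rintro n x ⟨y, rfl⟩
    rw [pow_succ]
    exact ⟨T y, rfl⟩
  have hmono : ∀ {k l : ℕ}, k ≤ l → LinearMap.range (T ^ l).toLinearMap ≤ LinearMap.range (T ^ k).toLinearMap := by
    intro k l h
    induction h with
    | refl => exact le_rfl
    | step _ ih => exact le_trans (hle _) ih
  obtain ⟨z, hz⟩ : ∃ z : E, z ∉ LinearMap.range (T).toLinearMap := by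
    by_contra h
    push_neg at h
    exact hns fun v => h v
  have hstrict : ∀ n : ℕ, (T ^ n) z ∈ LinearMap.range (T ^ n).toLinearMap ∧
      (T ^ n) z ∉ LinearMap.range (T ^ (n + 1)).toLinearMap := by
    intro n
    refine ⟨⟨z, rfl⟩, ?_⟩
    rintro ⟨w, hw⟩
    rw [pow_succ] at hw
    simp only [ContinuousLinearMap.coe_coe, ContinuousLinearMap.mul_apply] at hw
    exact hz ⟨w, hinjn n hw⟩
  have hx : ∀ n : ℕ, ∃ x : E, x ∈ LinearMap.range (T ^ n).toLinearMap ∧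
      x ∈ (LinearMap.range (T ^ (n + 1)).toLinearMap)ᗮ ∧ ‖x‖ = 1 := by
    intro n
    haveI : CompleteSpace ↥(LinearMap.range (T ^ (n + 1)).toLinearMap) := (hRcl (n + 1)).completeSpace_coe
    set R1 := LinearMap.range (T ^ (n + 1)).toLinearMap with hR1
    set u := (T ^ n) z with hu
    set w := u - ↑(orthogonalProjection R1 u) with hwdef
    have hwo : w ∈ R1ᗮ := Submodule.sub_starProjection_mem_orthogonal u
    have hwR : w ∈ LinearMap.range (T ^ n).toLinearMap :=
      sub_mem (hstrict n).1 (hle n (orthogonalProjection R1 u).2)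
    have hw0 : w ≠ 0 := by
      intro h
      apply (hstrict n).2
      have : u = ↑(orthogonalProjection R1 u) := by rwa [sub_eq_zero] at h
      rw [← hu, this]
      exact (orthogonalProjection R1 u).2
    refine ⟨‖w‖⁻¹ • w, Submodule.smul_mem _ _ hwR, Submodule.smul_mem _ _ hwo, ?_⟩
    rw [norm_smul, norm_inv, norm_norm, inv_mul_cancel₀ (norm_ne_zero_iff.2 hw0)]
  choose x hx1 hx2 hx3 using hx
  have key : ∀ m n : ℕ, n < m → (1 : ℝ) ≤ ‖(T - 1) (x n) - (T - 1) (x m)‖ := by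
    intro m n hnm
    set z' := T (x n) + x m - T (x m) with hz'
    have hz'mem : z' ∈ LinearMap.range (T ^ (n + 1)).toLinearMap := by
      have h1 : T (x n) ∈ LinearMap.range (T ^ (n + 1)).toLinearMap := by
        obtain ⟨v, hv⟩ := hx1 n
        refine ⟨v, ?_⟩
        rw [pow_succ']
        simp only [ContinuousLinearMap.coe_coe, ContinuousLinearMap.mul_apply] at hv ⊢
        rw [hv]
      have h2 : x m ∈ LinearMap.range (T ^ (n + 1)).toLinearMap := hmono hnm (hx1 m)
      have h3 : T (x m) ∈ LinearMap.range (T ^ (n + 1)).toLinearMap := by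
        have h3' : T (x m) ∈ LinearMap.range (T ^ (m + 1)).toLinearMap := by
          obtain ⟨v, hv⟩ := hx1 m
          refine ⟨v, ?_⟩
          rw [pow_succ']
          simp only [ContinuousLinearMap.coe_coe, ContinuousLinearMap.mul_apply] at hv ⊢
          rw [hv]
        exact hmono (by omega) h3'
      exact sub_mem (add_mem h1 h2) h3
    have horth : inner ℂ z' (x n) = (0 : ℂ) :=
      (Submodule.mem_orthogonal _ _).1 (hx2 n) z' hz'mem
    have hdiff : (T - 1) (x n) - (T - 1) (x m) = z' - x n := by
      simp only [hz', ContinuousLinearMap.sub_apply, ContinuousLinearMap.one_apply]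
      abel
    rw [hdiff]
    have hinner : inner ℂ (z' - x n) (x n) = (-1 : ℂ) := by
      rw [inner_sub_left, horth, inner_self_eq_norm_sq_to_K, hx3 n]
      norm_num
    have hcs := norm_inner_le_norm (𝕜 := ℂ) (z' - x n) (x n)
    rw [hinner, hx3 n, mul_one] at hcs
    simpa using hcs
  obtain ⟨C, hC, him⟩ := hK.image_closedBall_subset_compact 1
  have hmem : ∀ n, (T - 1) (x n) ∈ C := fun n =>
    him ⟨x n, by simp [mem_closedBall, dist_eq_norm, hx3 n], rfl⟩
  obtain ⟨y, _, φ, hφ, hconv⟩ := hC.tendsto_subseq hmem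
  rw [Metric.tendsto_atTop] at hconv
  obtain ⟨N, hN⟩ := hconv (1 / 2) (by norm_num)
  have h1 := hN N le_rfl
  have h2 := hN (N + 1) (by omega)
  have h3 : dist ((T - 1) (x (φ N))) ((T - 1) (x (φ (N + 1)))) < 1 := by
    calc dist ((T - 1) (x (φ N))) ((T - 1) (x (φ (N + 1))))
        ≤ dist ((T - 1) (x (φ N))) y + dist ((T - 1) (x (φ (N + 1)))) y :=
          dist_triangle_right _ _ _
      _ < 1 / 2 + 1 / 2 := add_lt_add h1 h2
      _ = 1 := by norm_num
  have h4 := key (φ (N + 1)) (φ N) (hφ (by omega))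
  rw [dist_eq_norm] at h3
  linarith

lemma exists_injective_linearMap (V W : Type*) [AddCommGroup V] [Module ℂ V]
    [AddCommGroup W] [Module ℂ W] [FiniteDimensional ℂ V] [FiniteDimensional ℂ W]
    (h : Module.finrank ℂ V ≤ Module.finrank ℂ W) :
    ∃ f : V →ₗ[ℂ] W, Function.Injective f := by
  set b := Module.finBasis ℂ V
  set c := Module.finBasis ℂ W
  refine ⟨b.constr ℂ (fun i => c (Fin.castLE h i)), ?_⟩
  have hli : LinearIndependent ℂ (fun i => c (Fin.castLE h i)) :=
    c.linearIndependent.comp _ (Fin.castLE_injective h)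
  rw [← LinearMap.ker_eq_bot, eq_bot_iff]
  intro v hv
  simp only [LinearMap.mem_ker] at hv
  rw [Basis.constr_apply_fintype] at hv
  have hz := Fintype.linearIndependent_iff.1 hli _ hv
  have : b.repr v = 0 := by
    ext i
    simpa [Basis.equivFun_apply] using hz i
  simpa using b.repr.map_eq_zero_iff.1 this

lemma finrank_ker_adjoint_le (T : E →L[ℂ] E) (hK : IsCompactOperator ⇑(T - 1))
    (hK' : IsCompactOperator ⇑(ContinuousLinearMap.adjoint T - 1))
    (hle : Module.finrank ℂ (LinearMap.ker (T).toLinearMap)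
      ≤ Module.finrank ℂ (LinearMap.ker (ContinuousLinearMap.adjoint T).toLinearMap)) :
    Module.finrank ℂ (LinearMap.ker (ContinuousLinearMap.adjoint T).toLinearMap)
      ≤ Module.finrank ℂ (LinearMap.ker (T).toLinearMap) := by
  haveI hN : FiniteDimensional ℂ (LinearMap.ker (T).toLinearMap) := ker_fd_of_cpt T hK
  haveI hM : FiniteDimensional ℂ (LinearMap.ker (ContinuousLinearMap.adjoint T).toLinearMap) :=
    ker_fd_of_cpt _ hK'
  set N := LinearMap.ker (T).toLinearMap with hNdef
  set M := LinearMap.ker (ContinuousLinearMap.adjoint T).toLinearMap with hMdef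
  obtain ⟨F₀, hF₀⟩ := exists_injective_linearMap ↥N ↥M hle
  haveI : CompleteSpace ↥N := FiniteDimensional.complete ℂ _
  set u : E →L[ℂ] ↥M := (LinearMap.toContinuousLinearMap F₀).comp (orthogonalProjection N)
    with hudef
  set F : E →L[ℂ] E := M.subtypeL.comp u with hFdef
  have hFc : IsCompactOperator ⇑F := by
    have h0 : IsCompactOperator (Subtype.val ∘ ⇑u) :=
      (cpt_of_fd_codomain u).continuous_comp continuous_subtype_val
    exact h0
  have hFmem : ∀ x : E, F x ∈ M := fun x => (u x).2
  have horth : M = (LinearMap.range (T).toLinearMap)ᗮ := ker_adjoint_eq_orthogonal_range T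
  set S := T + F with hSdef
  have hS : IsCompactOperator ⇑(S - 1) := by
    have heq : S - 1 = (T - 1) + F := by rw [hSdef]; abel
    have hco : ⇑((T - 1) + F) = ⇑(T - 1) + ⇑F := rfl
    rw [heq, hco]
    exact hK.add hFc
  have hFval : ∀ (x : E) (hx : x ∈ N), F x = ↑(F₀ ⟨x, hx⟩) := by
    intro x hx
    have : orthogonalProjection N x = ⟨x, hx⟩ := orthogonalProjection_mem_subspace_eq_self ⟨x, hx⟩
    simp only [hFdef, hudef, ContinuousLinearMap.comp_apply, Submodule.subtypeL_apply,
      LinearMap.coe_toContinuousLinearMap']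
    rw [this]
  have hzero : ∀ x : E, S x = 0 → x = 0 := by
    intro x hx
    have hxadd : T x + F x = 0 := hx
    have hTx0 : T x = 0 := by
      have h1 : T x ∈ LinearMap.range (T).toLinearMap := ⟨x, rfl⟩
      have h2 : T x ∈ (LinearMap.range (T).toLinearMap)ᗮ := by
        have : T x = -F x := eq_neg_of_add_eq_zero_left hxadd
        rw [this]
        exact neg_mem (horth ▸ hFmem x)
      have := (Submodule.orthogonal_disjoint (LinearMap.range (T).toLinearMap)).le_bot ⟨h1, h2⟩
      simpa using this
    have hxN : x ∈ N := LinearMap.mem_ker.2 hTx0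
    have hFx0 : F x = 0 := by rw [hTx0] at hxadd; simpa using hxadd
    rw [hFval x hxN] at hFx0
    have hF0 : F₀ ⟨x, hxN⟩ = 0 := by exact_mod_cast hFx0
    have := hF₀ (by rw [hF0, map_zero] : F₀ ⟨x, hxN⟩ = F₀ 0)
    exact congrArg Subtype.val this
  have hSinj : Function.Injective ⇑S := by
    intro a b hab
    have := hzero (a - b) (by rw [map_sub, hab, sub_self])
    exact sub_eq_zero.1 this
  have hSsurj := surj_of_inj_of_cpt S hS hSinj
  have hF₀surj : Function.Surjective F₀ := by
    intro y
    obtain ⟨x, hx⟩ := hSsurj ↑y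
    have hxadd : T x + F x = ↑y := hx
    have hTx0 : T x = 0 := by
      have h1 : T x ∈ LinearMap.range (T).toLinearMap := ⟨x, rfl⟩
      have h2 : T x ∈ (LinearMap.range (T).toLinearMap)ᗮ := by
        have : T x = ↑y - F x := eq_sub_of_add_eq hxadd
        rw [this]
        exact sub_mem (horth ▸ y.2) (horth ▸ hFmem x)
      have := (Submodule.orthogonal_disjoint (LinearMap.range (T).toLinearMap)).le_bot ⟨h1, h2⟩
      simpa using this
    have hxN : x ∈ N := LinearMap.mem_ker.2 hTx0
    have hFy : F x = ↑y := by rw [hTx0] at hxadd; simpa using hxadd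
    rw [hFval x hxN] at hFy
    exact ⟨⟨x, hxN⟩, Subtype.coe_injective hFy⟩
  have h1 := LinearMap.finrank_range_le F₀
  rw [LinearMap.range_eq_top.2 hF₀surj, finrank_top] at h1
  exact h1

lemma index_one_add_cpt (T : E →L[ℂ] E) (hK : IsCompactOperator ⇑(T - 1))
    (hK' : IsCompactOperator ⇑(ContinuousLinearMap.adjoint T - 1)) :
    FiniteDimensional ℂ (LinearMap.ker (T).toLinearMap) ∧ FiniteDimensional ℂ (E ⧸ LinearMap.range (T).toLinearMap) ∧
      fredholmIndex T = 0 := by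
  haveI h1 := ker_fd_of_cpt T hK
  haveI h2 := ker_fd_of_cpt _ hK'
  haveI : CompleteSpace ↥(LinearMap.range (T).toLinearMap) := (range_closed_of_cpt T hK).completeSpace_coe
  have hcompl : IsCompl (LinearMap.range (T).toLinearMap) (LinearMap.range (T).toLinearMap)ᗮ :=
    Submodule.isCompl_orthogonal_of_hasOrthogonalProjection
  have e : (E ⧸ LinearMap.range (T).toLinearMap) ≃ₗ[ℂ] ↥(LinearMap.ker (ContinuousLinearMap.adjoint T).toLinearMap) :=
    (Submodule.quotientEquivOfIsCompl _ _ hcompl).trans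
      (LinearEquiv.ofEq _ _ (ker_adjoint_eq_orthogonal_range T).symm)
  haveI hcq : FiniteDimensional ℂ (E ⧸ LinearMap.range (T).toLinearMap) := e.symm.finiteDimensional
  have hnm : Module.finrank ℂ (LinearMap.ker (T).toLinearMap)
      = Module.finrank ℂ (LinearMap.ker (ContinuousLinearMap.adjoint T).toLinearMap) := by
    rcases le_total (Module.finrank ℂ (LinearMap.ker (T).toLinearMap))
      (Module.finrank ℂ (LinearMap.ker (ContinuousLinearMap.adjoint T).toLinearMap)) with h | h
    · exact le_antisymm h (finrank_ker_adjoint_le T hK hK' h)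
    · have hK'' : IsCompactOperator
          ⇑(ContinuousLinearMap.adjoint (ContinuousLinearMap.adjoint T) - 1) := by
        rwa [ContinuousLinearMap.adjoint_adjoint]
      have h' : Module.finrank ℂ (LinearMap.ker (ContinuousLinearMap.adjoint T).toLinearMap)
          ≤ Module.finrank ℂ
          (LinearMap.ker (ContinuousLinearMap.adjoint (ContinuousLinearMap.adjoint T)).toLinearMap) := by
        rwa [ContinuousLinearMap.adjoint_adjoint]
      have hfin := finrank_ker_adjoint_le (ContinuousLinearMap.adjoint T) hK' hK'' h'
      rw [ContinuousLinearMap.adjoint_adjoint] at hfin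
      exact le_antisymm hfin h
  refine ⟨h1, hcq, ?_⟩
  unfold fredholmIndex
  rw [e.finrank_eq, hnm]
  simp

end Analysis

/-! ### Part C: projections and the relative index -/

section Projections

open Submodule Module

variable {H : Type*} [NormedAddCommGroup H] [InnerProductSpace ℂ H] [CompleteSpace H]

lemma mem_range_idem {A : H →L[ℂ] H} (hA : A.comp A = A) {x : H} :
    x ∈ LinearMap.range (A).toLinearMap ↔ A x = x := by
  constructor
  · rintro ⟨y, rfl⟩
    have := ContinuousLinearMap.ext_iff.1 hA y
    simpa using this
  · intro h; exact ⟨x, h⟩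

lemma range_idem_closed {A : H →L[ℂ] H} (hA : A.comp A = A) :
    IsClosed ((LinearMap.range (A).toLinearMap : Submodule ℂ H) : Set H) := by
  have hs : ((LinearMap.range (A).toLinearMap : Submodule ℂ H) : Set H) = {x | A x = x} := by
    ext x
    simpa using mem_range_idem hA
  rw [hs]
  exact isClosed_eq A.continuous continuous_id

lemma relOp_shape {A : H →L[ℂ] H} (hA : A.comp A = A) {D : H →L[ℂ] H}
    (hD : IsCompactOperator ⇑D)
    {X : ↥(LinearMap.range (A).toLinearMap) →L[ℂ] ↥(LinearMap.range (A).toLinearMap)}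
    (hX : ∀ x : ↥(LinearMap.range (A).toLinearMap), (↑(X x) : H) = ↑x + D ↑x) :
    IsCompactOperator ⇑(X - 1) := by
  apply cpt_into_submodule (LinearMap.range (A).toLinearMap) (range_idem_closed hA)
  have hco : (Subtype.val ∘ ⇑(X - 1) : ↥(LinearMap.range (A).toLinearMap) → H)
      = ⇑D ∘ ⇑(LinearMap.range (A).toLinearMap).subtypeL := by
    funext x
    simp only [Function.comp_apply, ContinuousLinearMap.sub_apply,
      ContinuousLinearMap.one_apply, Submodule.coe_sub, hX x, Submodule.subtypeL_apply]
    abel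
  rw [hco]
  exact hD.comp_clm _

lemma relOp_adjoint (A B : H →L[ℂ] H) (hAsa : IsSelfAdjoint A) (hBsa : IsSelfAdjoint B)
    (hA : A.comp A = A) (hB : B.comp B = B)
    [CompleteSpace ↥(LinearMap.range (A).toLinearMap)] [CompleteSpace ↥(LinearMap.range (B).toLinearMap)] :
    ContinuousLinearMap.adjoint (relOp A B) = relOp B A := by
  symm
  apply (ContinuousLinearMap.eq_adjoint_iff _ _).2
  intro x y
  rw [Submodule.coe_inner, Submodule.coe_inner]
  have h1 : (↑(relOp B A x) : H) = A ↑x := rfl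
  have h2 : (↑(relOp A B y) : H) = B ↑y := rfl
  rw [h1, h2]
  have hx : B ↑x = ↑x := (mem_range_idem hB).1 x.2
  have hy : A ↑y = ↑y := (mem_range_idem hA).1 y.2
  have l := ContinuousLinearMap.adjoint_inner_left A (↑y) (↑x)
  rw [hAsa.adjoint_eq] at l
  have r := ContinuousLinearMap.adjoint_inner_left B (↑y) (↑x)
  rw [hBsa.adjoint_eq] at r
  rw [l, hy, ← r, hx]

lemma relOp_comp_cpt (A B : H →L[ℂ] H) (hA : A.comp A = A) (hB : B.comp B = B)
    (hd : IsCompactOperator ⇑(B - A)) :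
    IsCompactOperator ⇑(relOp B A ∘L relOp A B - 1) := by
  apply relOp_shape hA (D := A ∘L (B - A))
  · have hco : ⇑(A ∘L (B - A)) = ⇑A ∘ ⇑(B - A) := rfl
    rw [hco]
    exact hd.continuous_comp A.continuous
  · intro x
    have hx : A ↑x = ↑x := (mem_range_idem hA).1 x.2
    show (A (B ↑x) : H) = ↑x + (A ∘L (B - A)) ↑x
    have hAA : A (A ↑x) = ↑x := by rw [hx, hx]
    simp only [ContinuousLinearMap.comp_apply, ContinuousLinearMap.sub_apply, map_sub, hAA]
    abel

lemma relOp_ker_fd (A B : H →L[ℂ] H) (hA : A.comp A = A) (hB : B.comp B = B)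
    (hd : IsCompactOperator ⇑(B - A)) :
    FiniteDimensional ℂ (LinearMap.ker (relOp A B).toLinearMap) := by
  haveI : CompleteSpace ↥(LinearMap.range (A).toLinearMap) := (range_idem_closed hA).completeSpace_coe
  have hS := relOp_comp_cpt A B hA hB hd
  haveI := ker_fd_of_cpt _ hS
  apply Submodule.finiteDimensional_of_le (S₂ := LinearMap.ker (relOp B A ∘L relOp A B).toLinearMap)
  intro x hx
  simp only [LinearMap.mem_ker, ContinuousLinearMap.coe_coe] at *
  rw [ContinuousLinearMap.comp_apply, hx, map_zero]

lemma relOp_coker_fd (A B : H →L[ℂ] H) (hAsa : IsSelfAdjoint A) (hBsa : IsSelfAdjoint B)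
    (hA : A.comp A = A) (hB : B.comp B = B)
    (hd : IsCompactOperator ⇑(B - A)) (hd' : IsCompactOperator ⇑(A - B)) :
    FiniteDimensional ℂ (↥(LinearMap.range (B).toLinearMap) ⧸ LinearMap.range (relOp A B).toLinearMap) := by
  haveI cA : CompleteSpace ↥(LinearMap.range (A).toLinearMap) := (range_idem_closed hA).completeSpace_coe
  haveI cB : CompleteSpace ↥(LinearMap.range (B).toLinearMap) := (range_idem_closed hB).completeSpace_coe
  set S := relOp A B ∘L relOp B A with hSdef
  have hS : IsCompactOperator ⇑(S - 1) := relOp_comp_cpt B A hB hA hd'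
  have hadj : ContinuousLinearMap.adjoint S = S := by
    rw [hSdef, ContinuousLinearMap.adjoint_comp, relOp_adjoint A B hAsa hBsa hA hB,
      relOp_adjoint B A hBsa hAsa hB hA]
  have hS' : IsCompactOperator ⇑(ContinuousLinearMap.adjoint S - 1) := by rwa [hadj]
  obtain ⟨_, hfd, _⟩ := index_one_add_cpt S hS hS'
  have hle : LinearMap.range (S).toLinearMap ≤ LinearMap.range (relOp A B).toLinearMap := by
    rintro x ⟨y, rfl⟩
    exact ⟨relOp B A y, rfl⟩
  have hsurj : Function.Surjective (Submodule.mapQ (LinearMap.range (S).toLinearMap)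
      (LinearMap.range (relOp A B).toLinearMap) LinearMap.id (by simpa using hle)) := by
    intro y
    obtain ⟨x, rfl⟩ := Submodule.Quotient.mk_surjective _ y
    exact ⟨Submodule.Quotient.mk x, by simp⟩
  exact Module.Finite.of_surjective _ hsurj

lemma relOp_pair_index (A B : H →L[ℂ] H) (hAsa : IsSelfAdjoint A) (hBsa : IsSelfAdjoint B)
    (hA : A.comp A = A) (hB : B.comp B = B)
    (hd : IsCompactOperator ⇑(B - A)) (hd' : IsCompactOperator ⇑(A - B)) :
    fredholmIndex (relOp B A) + fredholmIndex (relOp A B) = 0 := by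
  haveI cA : CompleteSpace ↥(LinearMap.range (A).toLinearMap) := (range_idem_closed hA).completeSpace_coe
  haveI cB : CompleteSpace ↥(LinearMap.range (B).toLinearMap) := (range_idem_closed hB).completeSpace_coe
  have hS := relOp_comp_cpt A B hA hB hd
  have hadj : ContinuousLinearMap.adjoint (relOp B A ∘L relOp A B)
      = relOp B A ∘L relOp A B := by
    rw [ContinuousLinearMap.adjoint_comp, relOp_adjoint B A hBsa hAsa hB hA,
      relOp_adjoint A B hAsa hBsa hA hB]
  obtain ⟨_, _, hidx⟩ := index_one_add_cpt _ hS (by rwa [hadj])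
  have hcomp := index_comp (relOp A B) (relOp B A)
    (relOp_ker_fd A B hA hB hd) (relOp_coker_fd A B hAsa hBsa hA hB hd hd')
    (relOp_ker_fd B A hB hA hd') (relOp_coker_fd B A hBsa hAsa hB hA hd' hd)
  rw [hidx] at hcomp
  omega

end Projections

/-- Cocycle property of the relative index of projections: if `P, Q, R` are orthogonal
projections with `Q - P` and `R - Q` compact, then `R - P` is compact and
`ind (RP : im P → im R) = ind (RQ : im Q → im R) + ind (QP : im P → im Q)`. -/
theorem relative_index_additive {H : Type*} [NormedAddCommGroup H]
    [InnerProductSpace ℂ H] [CompleteSpace H]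
    (P Q R : H →L[ℂ] H)
    (hPsa : IsSelfAdjoint P) (hPidem : P.comp P = P)
    (hQsa : IsSelfAdjoint Q) (hQidem : Q.comp Q = Q)
    (hRsa : IsSelfAdjoint R) (hRidem : R.comp R = R)
    (hQP : IsCompactOperator ⇑(Q - P)) (hRQ : IsCompactOperator ⇑(R - Q)) :
    IsCompactOperator ⇑(R - P) ∧
    fredholmIndex (relOp P R) = fredholmIndex (relOp Q R) + fredholmIndex (relOp P Q) := by
  have hRP : IsCompactOperator ⇑(R - P) := by
    have h : (⇑(R - P) : H → H) = ⇑(R - Q) + ⇑(Q - P) := by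
      funext x; simp
    rw [h]
    exact hRQ.add hQP
  refine ⟨hRP, ?_⟩
  have hPQ' : IsCompactOperator ⇑(P - Q) := by
    have h : (⇑(P - Q) : H → H) = -⇑(Q - P) := by funext x; simp
    rw [h]; exact hQP.neg
  have hQR' : IsCompactOperator ⇑(Q - R) := by
    have h : (⇑(Q - R) : H → H) = -⇑(R - Q) := by funext x; simp
    rw [h]; exact hRQ.neg
  have hPR' : IsCompactOperator ⇑(P - R) := by
    have h : (⇑(P - R) : H → H) = -⇑(R - P) := by funext x; simp
    rw [h]; exact hRP.neg
  haveI cP : CompleteSpace ↥(LinearMap.range (P).toLinearMap) := (range_idem_closed hPidem).completeSpace_coe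
  haveI cQ : CompleteSpace ↥(LinearMap.range (Q).toLinearMap) := (range_idem_closed hQidem).completeSpace_coe
  haveI cR : CompleteSpace ↥(LinearMap.range (R).toLinearMap) := (range_idem_closed hRidem).completeSpace_coe
  have k_PQ := relOp_ker_fd P Q hPidem hQidem hQP
  have c_PQ := relOp_coker_fd P Q hPsa hQsa hPidem hQidem hQP hPQ'
  have k_QR := relOp_ker_fd Q R hQidem hRidem hRQ
  have c_QR := relOp_coker_fd Q R hQsa hRsa hQidem hRidem hRQ hQR'
  have k_RP := relOp_ker_fd R P hRidem hPidem hPR'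
  have c_RP := relOp_coker_fd R P hRsa hPsa hRidem hPidem hPR' hRP
  have k_g := fd_ker_comp (relOp Q R) (relOp R P) k_QR k_RP
  have c_g := (finrank_coker_comp (relOp Q R) (relOp R P) c_QR c_RP).1
  have hT1 : fredholmIndex ((relOp R P ∘L relOp Q R) ∘L relOp P Q)
      = fredholmIndex (relOp R P ∘L relOp Q R) + fredholmIndex (relOp P Q) :=
    index_comp (relOp P Q) (relOp R P ∘L relOp Q R) k_PQ c_PQ k_g c_g
  have hT2 : fredholmIndex (relOp R P ∘L relOp Q R)
      = fredholmIndex (relOp R P) + fredholmIndex (relOp Q R) :=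
    index_comp (relOp Q R) (relOp R P) k_QR c_QR k_RP c_RP
  set T := (relOp R P ∘L relOp Q R) ∘L relOp P Q with hTdef
  have hQQ : ∀ v : H, Q (Q v) = Q v := by
    intro v
    have := ContinuousLinearMap.ext_iff.1 hQidem v
    simpa using this
  have hRR : ∀ v : H, R (R v) = R v := by
    intro v
    have := ContinuousLinearMap.ext_iff.1 hRidem v
    simpa using this
  have hTcpt : IsCompactOperator ⇑(T - 1) := by
    apply relOp_shape hPidem (D := P ∘L ((R - Q) ∘L Q + (Q - P)))
    · have hD0 : IsCompactOperator ⇑((R - Q) ∘L Q + (Q - P)) := by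
        have hco : ⇑((R - Q) ∘L Q + (Q - P)) = (⇑(R - Q) ∘ ⇑Q) + ⇑(Q - P) := rfl
        rw [hco]
        exact (hRQ.comp_clm Q).add hQP
      have hco2 : ⇑(P ∘L ((R - Q) ∘L Q + (Q - P)))
          = ⇑P ∘ ⇑((R - Q) ∘L Q + (Q - P)) := rfl
      rw [hco2]
      exact hD0.continuous_comp P.continuous
    · intro x
      have hx : P ↑x = ↑x := (mem_range_idem hPidem).1 x.2
      have hPP : P (P ↑x) = ↑x := by rw [hx, hx]
      show (P (R (Q ↑x)) : H) = ↑x + (P ∘L ((R - Q) ∘L Q + (Q - P))) ↑x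
      simp only [ContinuousLinearMap.comp_apply, ContinuousLinearMap.add_apply,
        ContinuousLinearMap.sub_apply, map_sub, map_add, hQQ, hPP]
      abel
  have hTadj : ContinuousLinearMap.adjoint T = relOp Q P ∘L (relOp R Q ∘L relOp P R) := by
    rw [hTdef, ContinuousLinearMap.adjoint_comp, ContinuousLinearMap.adjoint_comp,
      relOp_adjoint P Q hPsa hQsa hPidem hQidem, relOp_adjoint Q R hQsa hRsa hQidem hRidem,
      relOp_adjoint R P hRsa hPsa hRidem hPidem]
  have hTadjcpt : IsCompactOperator ⇑(ContinuousLinearMap.adjoint T - 1) := by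
    rw [hTadj]
    apply relOp_shape hPidem (D := P ∘L ((Q - R) ∘L R + (R - P)))
    · have hD0 : IsCompactOperator ⇑((Q - R) ∘L R + (R - P)) := by
        have hco : ⇑((Q - R) ∘L R + (R - P)) = (⇑(Q - R) ∘ ⇑R) + ⇑(R - P) := rfl
        rw [hco]
        exact (hQR'.comp_clm R).add hRP
      have hco2 : ⇑(P ∘L ((Q - R) ∘L R + (R - P)))
          = ⇑P ∘ ⇑((Q - R) ∘L R + (R - P)) := rfl
      rw [hco2]
      exact hD0.continuous_comp P.continuous
    · intro x
      have hx : P ↑x = ↑x := (mem_range_idem hPidem).1 x.2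
      have hPP : P (P ↑x) = ↑x := by rw [hx, hx]
      show (P (Q (R ↑x)) : H) = ↑x + (P ∘L ((Q - R) ∘L R + (R - P))) ↑x
      simp only [ContinuousLinearMap.comp_apply, ContinuousLinearMap.add_apply,
        ContinuousLinearMap.sub_apply, map_sub, map_add, hRR, hPP]
      abel
  obtain ⟨_, _, hT0⟩ := index_one_add_cpt T hTcpt hTadjcpt
  have hpair := relOp_pair_index P R hPsa hRsa hPidem hRidem hRP hPR'
  omega
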